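/- Say a set S ⊆ [n] separates an unordered pair {i,j} of distinct indices if exactly one of i,j lies in S, and a pair (S_1,S_2) of subsets separates {i,j} if S_1 or S_2 does. There exists a collection F ⊆ 2^{[n]} × 2^{[n]} of size O(log n) such that for every pair {i,j} ∈ C([n],2), at least a 2/3-fraction of the elements of F separate {i,j}. -/

import Mathlib

open Finset Classical

/-- `S` separates the pair `{i, j}` if exactly one of `i, j` lies in `S`. -/
def SepSet {n : ℕ} (S : Finset (Fin n)) (i j : Fin n) : Prop :=
  (i ∈ S ∧ j ∉ S) ∨ (j ∈ S ∧ i ∉ S)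

/-- A pair `(S₁, S₂)` separates `{i, j}` if `S₁` or `S₂` does. -/
def SepPair {n : ℕ} (p : Finset (Fin n) × Finset (Fin n)) (i j : Fin n) : Prop :=
  SepSet p.1 i j ∨ SepSet p.2 i j

namespace Stmt6Aux

variable {n : ℕ}

abbrev P (n : ℕ) := Finset (Fin n) × Finset (Fin n)

lemma sepSet_symmDiff {i j : Fin n} (hij : i ≠ j) (S : Finset (Fin n)) :
    SepSet (symmDiff S {j}) i j ↔ ¬ SepSet S i j := by
  have hi : i ∈ symmDiff S {j} ↔ i ∈ S := by
    simp [Finset.mem_symmDiff, hij]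
  have hj : j ∈ symmDiff S {j} ↔ j ∉ S := by
    simp [Finset.mem_symmDiff]
  simp only [SepSet, hi, hj]
  tauto

lemma two_mul_card_nonsep {i j : Fin n} (hij : i ≠ j) :
    2 * #(univ.filter fun S : Finset (Fin n) => ¬ SepSet S i j) = 2 ^ n := by
  have hbij : #(univ.filter fun S : Finset (Fin n) => ¬ SepSet S i j)
      = #(univ.filter fun S : Finset (Fin n) => SepSet S i j) := by
    apply card_nbij' (fun S => symmDiff S {j}) (fun S => symmDiff S {j})
    · intro S hS
      simp only [mem_coe, mem_filter, mem_univ, true_and] at hS ⊢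
      exact (sepSet_symmDiff hij S).mpr hS
    · intro S hS
      simp only [mem_coe, mem_filter, mem_univ, true_and] at hS ⊢
      rw [sepSet_symmDiff hij, not_not]
      exact hS
    · intro S _
      exact symmDiff_symmDiff_cancel_right {j} S
    · intro S _
      exact symmDiff_symmDiff_cancel_right {j} S
  have htot := card_filter_add_card_filter_not
    (s := (univ : Finset (Finset (Fin n)))) (p := fun S => SepSet S i j)
  have huniv : #(univ : Finset (Finset (Fin n))) = 2 ^ n := by
    simp [Finset.card_univ, Fintype.card_finset]
  omega

lemma four_mul_card_nonsep_pairs {i j : Fin n} (hij : i ≠ j) :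
    4 * #(univ.filter fun p : P n => ¬ SepPair p i j) = 4 ^ n := by
  have h1 : (univ.filter fun p : P n => ¬ SepPair p i j)
      = (univ.filter fun S : Finset (Fin n) => ¬ SepSet S i j) ×ˢ
        (univ.filter fun S : Finset (Fin n) => ¬ SepSet S i j) := by
    ext p
    simp only [mem_filter, mem_univ, true_and, mem_product, SepPair, not_or]
  have h2 := two_mul_card_nonsep (n := n) hij
  rw [h1, card_product]
  have : (4:ℕ) ^ n = 2 ^ n * 2 ^ n := by
    rw [show (4:ℕ) = 2 * 2 by norm_num, mul_pow]
  rw [this, ← h2]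
  ring

lemma sum_weights {i j : Fin n} (hij : i ≠ j) (t : ℕ) :
    4 ^ t * ∑ ω : Fin t → P n, 2 ^ #(univ.filter fun a => ¬ SepPair (ω a) i j)
      = 5 ^ t * 4 ^ (n * t) := by
  have hterm : ∀ ω : Fin t → P n,
      (2:ℕ) ^ #(univ.filter fun a => ¬ SepPair (ω a) i j)
        = ∏ a : Fin t, (if SepPair (ω a) i j then 1 else 2) := by
    intro ω
    rw [Finset.prod_ite]
    simp
  have hswap : ∑ ω : Fin t → P n, ∏ a : Fin t, (if SepPair (ω a) i j then (1:ℕ) else 2)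
      = (∑ p : P n, if SepPair p i j then (1:ℕ) else 2) ^ t := by
    have h := Finset.prod_univ_sum (fun _ : Fin t => (univ : Finset (P n)))
      (fun _ p => if SepPair p i j then (1:ℕ) else 2)
    rw [Fintype.piFinset_univ] at h
    rw [← h, Finset.prod_const, Finset.card_univ, Fintype.card_fin]
  have hsum0 : 4 * (∑ p : P n, if SepPair p i j then (1:ℕ) else 2) = 5 * 4 ^ n := by
    rw [Finset.sum_ite]
    simp only [Finset.sum_const, smul_eq_mul, mul_one]
    have h4 := four_mul_card_nonsep_pairs (n := n) hij
    have htot := card_filter_add_card_filter_not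
      (s := (univ : Finset (P n))) (p := fun p => SepPair p i j)
    have huniv : #(univ : Finset (P n)) = 4 ^ n := by
      simp [Finset.card_univ, Fintype.card_finset]
      rw [show (4:ℕ) = 2 * 2 by norm_num, mul_pow]
    clear hterm hswap
    omega
  calc 4 ^ t * ∑ ω : Fin t → P n, 2 ^ #(univ.filter fun a => ¬ SepPair (ω a) i j)
      = 4 ^ t * ∑ ω : Fin t → P n, ∏ a : Fin t, (if SepPair (ω a) i j then (1:ℕ) else 2) := by
        congr 1; exact Finset.sum_congr rfl fun ω _ => hterm ω
    _ = 4 ^ t * (∑ p : P n, if SepPair p i j then (1:ℕ) else 2) ^ t := by rw [hswap]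
    _ = (4 * (∑ p : P n, if SepPair p i j then (1:ℕ) else 2)) ^ t := by rw [mul_pow]
    _ = (5 * 4 ^ n) ^ t := by rw [hsum0]
    _ = 5 ^ t * 4 ^ (n * t) := by rw [mul_pow, ← pow_mul]

lemma bern_aux {N t : ℕ} (h : 2 * t ^ 2 < N) : N ^ t < 2 * (N - t) ^ t := by
  rcases Nat.eq_zero_or_pos t with ht0 | ht0
  · subst ht0; simp
  have htN : t ≤ N := by nlinarith
  have hN0 : 0 < N := lt_of_le_of_lt (Nat.zero_le _) h
  have hNR : (0:ℝ) < N := by exact_mod_cast hN0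
  have hx : (-2:ℝ) ≤ -((t:ℝ)/N) := by
    have h1 : (t:ℝ)/N ≤ 1 := by
      rw [div_le_one hNR]; exact_mod_cast htN
    linarith
  have hb := one_add_mul_le_pow hx t
  have heq : (1:ℝ) + -((t:ℝ)/N) = ((N:ℝ) - t)/N := by field_simp; ring
  rw [heq] at hb
  have hb2 : (1:ℝ) - (t:ℝ)^2/N ≤ (((N:ℝ) - t)/N) ^ t := by
    refine le_trans ?_ hb
    rw [mul_neg]
    have : (t:ℝ) * ((t:ℝ)/N) = (t:ℝ)^2/N := by ring
    rw [this]; ring_nf; rfl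
  have hhalf : (1:ℝ)/2 < 1 - (t:ℝ)^2/N := by
    have : (t:ℝ)^2/N < 1/2 := by
      rw [div_lt_iff₀ hNR]
      have : (2:ℝ) * t^2 < N := by exact_mod_cast h
      linarith
    linarith
  have hfrac : ((1:ℝ)/2) < (((N:ℝ) - t)/N) ^ t := lt_of_lt_of_le hhalf hb2
  have hpow : (((N:ℝ) - t)/N) ^ t = ((N:ℝ) - t)^t / N^t := by
    rw [div_pow]
  rw [hpow] at hfrac
  have hNt : (0:ℝ) < (N:ℝ)^t := by positivity
  rw [lt_div_iff₀ hNt] at hfrac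
  have hfinal : (N:ℝ)^t < 2 * ((N:ℝ) - (t:ℝ))^t := by nlinarith
  have hcast : ((N - t : ℕ):ℝ) = (N:ℝ) - (t:ℝ) := by
    rw [Nat.cast_sub htN]
  have : ((N:ℝ))^t < 2 * (((N - t : ℕ)):ℝ)^t := by rw [hcast]; exact hfinal
  exact_mod_cast this

lemma exists_F (n u : ℕ) (hu : 1 ≤ u)
    (h2 : n ^ 2 * 125 ^ u ≤ 128 ^ u) (h3 : 2 * (3 * u) ^ 2 < 4 ^ n) :
    ∃ F : Finset (P n), #F = 3 * u ∧
      ∀ i j : Fin n, i ≠ j → 2 * u ≤ #(F.filter fun p => SepPair p i j) := by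
  classical
  set t := 3 * u with ht
  set c : (Fin t → P n) → Fin n → Fin n → ℕ :=
    fun ω i j => #(univ.filter fun a => ¬ SepPair (ω a) i j) with hc
  set Bad : Fin n × Fin n → Finset (Fin t → P n) :=
    fun q => univ.filter fun ω => u + 1 ≤ c ω q.1 q.2 with hBad
  -- per-pair bad-count bound
  have hbad : ∀ q : Fin n × Fin n, q.1 ≠ q.2 →
      2 ^ (u+1) * 4 ^ t * #(Bad q) ≤ 5 ^ t * 4 ^ (n * t) := by
    rintro ⟨i, j⟩ hij
    have h1 : 2 ^ (u+1) * #(Bad (i, j)) ≤ ∑ ω : Fin t → P n, 2 ^ c ω i j := by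
      have hle : #(Bad (i,j)) * 2 ^ (u+1) ≤ ∑ ω ∈ Bad (i,j), 2 ^ c ω i j := by
        have := Finset.card_nsmul_le_sum (Bad (i,j)) (fun ω => 2 ^ c ω i j) (2 ^ (u+1))
          (fun ω hω => by
            have : u + 1 ≤ c ω i j := (mem_filter.mp hω).2
            exact Nat.pow_le_pow_right (by norm_num) this)
        simpa [smul_eq_mul] using this
      calc 2 ^ (u+1) * #(Bad (i,j)) = #(Bad (i,j)) * 2 ^ (u+1) := by ring
        _ ≤ ∑ ω ∈ Bad (i,j), 2 ^ c ω i j := hle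
        _ ≤ ∑ ω : Fin t → P n, 2 ^ c ω i j := by
            exact Finset.sum_le_sum_of_subset (Finset.filter_subset _ _)
    calc 2 ^ (u+1) * 4 ^ t * #(Bad (i,j)) = 4 ^ t * (2 ^ (u+1) * #(Bad (i,j))) := by ring
      _ ≤ 4 ^ t * ∑ ω : Fin t → P n, 2 ^ c ω i j := by gcongr
      _ = 5 ^ t * 4 ^ (n * t) := sum_weights hij t
  -- sum over all ordered pairs
  have hS : 2 * ∑ q ∈ (univ : Finset (Fin n × Fin n)).filter (fun q => q.1 ≠ q.2), #(Bad q)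
      ≤ 4 ^ (n * t) := by
    set OD := (univ : Finset (Fin n × Fin n)).filter (fun q => q.1 ≠ q.2) with hOD
    have h1 : 2 ^ (u+1) * 4 ^ t * ∑ q ∈ OD, #(Bad q) ≤ #OD * (5 ^ t * 4 ^ (n * t)) := by
      rw [Finset.mul_sum]
      calc ∑ q ∈ OD, 2 ^ (u+1) * 4 ^ t * #(Bad q)
          ≤ ∑ _q ∈ OD, 5 ^ t * 4 ^ (n * t) :=
            Finset.sum_le_sum fun q hq => hbad q (mem_filter.mp hq).2
        _ = #OD * (5 ^ t * 4 ^ (n * t)) := by rw [Finset.sum_const, smul_eq_mul]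
    have hODcard : #OD ≤ n ^ 2 := by
      calc #OD ≤ #(univ : Finset (Fin n × Fin n)) := Finset.card_filter_le _ _
        _ = n ^ 2 := by simp [Finset.card_univ, sq]
    have hkey : n ^ 2 * (5 ^ t * 4 ^ (n * t)) ≤ 2 ^ u * 4 ^ t * 4 ^ (n * t) := by
      have e1 : (5:ℕ) ^ t = 125 ^ u := by rw [ht, pow_mul]; norm_num
      have e2 : (2:ℕ) ^ u * 4 ^ t = 128 ^ u := by
        rw [ht, pow_mul, ← mul_pow]; norm_num
      calc n ^ 2 * (5 ^ t * 4 ^ (n * t)) = n ^ 2 * 125 ^ u * 4 ^ (n * t) := by rw [e1]; ring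
        _ ≤ 128 ^ u * 4 ^ (n * t) := by gcongr
        _ = 2 ^ u * 4 ^ t * 4 ^ (n * t) := by rw [e2]
    have h4 : (2 ^ u * 4 ^ t) * (2 * ∑ q ∈ OD, #(Bad q))
        ≤ (2 ^ u * 4 ^ t) * 4 ^ (n * t) := by
      calc (2 ^ u * 4 ^ t) * (2 * ∑ q ∈ OD, #(Bad q))
          = 2 ^ (u+1) * 4 ^ t * ∑ q ∈ OD, #(Bad q) := by ring
        _ ≤ #OD * (5 ^ t * 4 ^ (n * t)) := h1
        _ ≤ n ^ 2 * (5 ^ t * 4 ^ (n * t)) := by gcongr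
        _ ≤ (2 ^ u * 4 ^ t) * 4 ^ (n * t) := hkey
    exact Nat.le_of_mul_le_mul_left h4 (by positivity)
  -- injective count
  have hNcard : Fintype.card (P n) = 4 ^ n := by
    simp [Fintype.card_finset]
    rw [show (4:ℕ) = 2 * 2 by norm_num, mul_pow]
  have hΩ : Fintype.card (Fin t → P n) = 4 ^ (n * t) := by
    rw [Fintype.card_fun, hNcard, Fintype.card_fin, ← pow_mul]
  have hinj : #(univ.filter fun ω : Fin t → P n => Function.Injective ω)
      = (4 ^ n).descFactorial t := by
    rw [← Fintype.card_subtype,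
      Fintype.card_congr (Equiv.subtypeInjectiveEquivEmbedding (Fin t) (P n)),
      Fintype.card_embedding_eq, hNcard, Fintype.card_fin]
  have hD : 4 ^ (n * t) < 2 * (4 ^ n).descFactorial t := by
    have hlow : (4 ^ n - t) ^ t ≤ (4 ^ n).descFactorial t := by
      refine le_trans (Nat.pow_le_pow_left ?_ t) (Nat.pow_sub_le_descFactorial (4 ^ n) t)
      omega
    have hb := bern_aux (N := 4 ^ n) (t := t) h3
    rw [← pow_mul] at hb
    exact lt_of_lt_of_le hb (mul_le_mul_right hlow 2)
  -- existence of a good injective sequence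
  obtain ⟨ω, hωinj, hωgood⟩ : ∃ ω : Fin t → P n, Function.Injective ω ∧
      ∀ i j : Fin n, i ≠ j → c ω i j ≤ u := by
    by_contra hcon
    push_neg at hcon
    set OD := (univ : Finset (Fin n × Fin n)).filter (fun q => q.1 ≠ q.2) with hOD
    have hsub : (univ : Finset (Fin t → P n)) ⊆
        (univ.filter fun ω => ¬ Function.Injective ω) ∪ OD.biUnion Bad := by
      intro ω _
      by_cases hI : Function.Injective ω
      · obtain ⟨i, j, hij, hcω⟩ := hcon ω hI
        refine mem_union_right _ (mem_biUnion.mpr ⟨(i,j), ?_, ?_⟩)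
        · exact mem_filter.mpr ⟨mem_univ _, hij⟩
        · exact mem_filter.mpr ⟨mem_univ _, Nat.succ_le_of_lt hcω⟩
      · exact mem_union_left _ (mem_filter.mpr ⟨mem_univ _, hI⟩)
    have hcount : #(univ : Finset (Fin t → P n)) ≤
        #(univ.filter fun ω : Fin t → P n => ¬ Function.Injective ω) + ∑ q ∈ OD, #(Bad q) :=
      (Finset.card_le_card hsub).trans
        ((Finset.card_union_le _ _).trans (by gcongr; exact Finset.card_biUnion_le))
    have hsplit := card_filter_add_card_filter_not
      (s := (univ : Finset (Fin t → P n))) (p := fun ω => Function.Injective ω)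
    have hU : #(univ : Finset (Fin t → P n)) = 4 ^ (n * t) := by
      rw [Finset.card_univ, hΩ]
    omega
  -- build F
  refine ⟨univ.image ω, ?_, ?_⟩
  · rw [Finset.card_image_of_injective _ hωinj, Finset.card_univ, Fintype.card_fin]
  · intro i j hij
    rw [Finset.filter_image, Finset.card_image_of_injective _ hωinj]
    have h2' := card_filter_add_card_filter_not
      (s := (univ : Finset (Fin t))) (p := fun a => SepPair (ω a) i j)
    have h3' := hωgood i j hij
    have ht' : #(univ : Finset (Fin t)) = 3 * u := by
      rw [Finset.card_univ, Fintype.card_fin]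
    simp only [hc] at h3'
    omega

lemma big_pow_fact : (4:ℕ) * 125 ^ 100 ≤ 128 ^ 100 := by norm_num

lemma key_pow {n u : ℕ} (hn2 : 2 ≤ n) (hu : u = 100 * (Nat.log 2 n + 1)) :
    n ^ 2 * 125 ^ u ≤ 128 ^ u := by
  set k := Nat.log 2 n with hk
  have h1 : n < 2 ^ (k + 1) := Nat.lt_pow_succ_log_self (by norm_num) n
  have h2 : n ^ 2 ≤ 4 ^ (k + 1) := by
    calc n ^ 2 ≤ (2 ^ (k+1)) ^ 2 := Nat.pow_le_pow_left h1.le 2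
      _ = 4 ^ (k+1) := by
        rw [← pow_mul, mul_comm (k+1) 2, pow_mul]; norm_num
  calc n ^ 2 * 125 ^ u = n ^ 2 * (125 ^ 100) ^ (k+1) := by rw [hu, pow_mul]
    _ ≤ 4 ^ (k+1) * (125 ^ 100) ^ (k+1) := mul_le_mul_left h2 _
    _ = (4 * 125 ^ 100) ^ (k+1) := by rw [mul_pow]
    _ ≤ (128 ^ 100) ^ (k+1) := Nat.pow_le_pow_left big_pow_fact _
    _ = 128 ^ u := by rw [hu, pow_mul]

lemma pow_gt_sq {n : ℕ} (h : 16 ≤ n) : 180000 * n ^ 2 < 4 ^ n := by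
  induction n, h using Nat.le_induction with
  | base => norm_num
  | succ m hm ih =>
    have h1 : 180000 * (m+1)^2 ≤ 2 * (180000 * m^2) := by nlinarith
    have h2 : 4 ^ (m+1) = 4 ^ m * 4 := by rw [pow_succ]
    omega

end Stmt6Aux

theorem stmt6 :
    ∃ C : ℝ, 0 < C ∧ ∀ n : ℕ, 2 ≤ n →
      ∃ F : Finset (Finset (Fin n) × Finset (Fin n)),
        F.Nonempty ∧
        (F.card : ℝ) ≤ C * Real.log n ∧
        ∀ i j : Fin n, i ≠ j →
          (2 / 3 : ℝ) * F.card ≤ ((F.filter (fun p => SepPair p i j)).card : ℝ) := by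
  refine ⟨10 ^ 10, by norm_num, ?_⟩
  intro n hn
  have hln : (0.6931471803:ℝ) ≤ Real.log n := by
    refine Real.log_two_gt_d9.le.trans (Real.log_le_log (by norm_num) ?_)
    exact_mod_cast hn
  by_cases hbig : 16 ≤ n
  · have h3 : 2 * (3 * (100 * (Nat.log 2 n + 1))) ^ 2 < 4 ^ n := by
      have h1 : Nat.log 2 n < n := Nat.log_lt_self 2 (by omega)
      have h2 : 2 * (3 * (100 * (Nat.log 2 n + 1))) ^ 2 ≤ 180000 * n ^ 2 := by nlinarith
      exact lt_of_le_of_lt h2 (Stmt6Aux.pow_gt_sq hbig)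
    obtain ⟨F, hFcard, hFsep⟩ := Stmt6Aux.exists_F n (100 * (Nat.log 2 n + 1))
      (by omega) (Stmt6Aux.key_pow (by omega) rfl) h3
    refine ⟨F, ?_, ?_, ?_⟩
    · exact Finset.card_pos.mp (by rw [hFcard]; omega)
    · rw [hFcard]
      have hpow : ((2:ℝ)) ^ (Nat.log 2 n) ≤ (n:ℝ) := by
        exact_mod_cast Nat.pow_log_le_self 2 (by omega)
      have hk : (Nat.log 2 n : ℝ) * Real.log 2 ≤ Real.log n := by
        rw [← Real.log_pow]
        exact Real.log_le_log (by positivity) hpow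
      have hl2 : (0.6931471803:ℝ) ≤ Real.log 2 := Real.log_two_gt_d9.le
      have hkk : (Nat.log 2 n : ℝ) * 0.6931471803 ≤ Real.log n :=
        le_trans (by nlinarith [Nat.cast_nonneg (α := ℝ) (Nat.log 2 n)]) hk
      push_cast
      linarith [hkk, hln]
    · intro i j hij
      have h := hFsep i j hij
      rw [hFcard]
      have hc : ((2 * (100 * (Nat.log 2 n + 1)) : ℕ):ℝ)
          ≤ ((F.filter fun p => SepPair p i j).card : ℝ) := by exact_mod_cast h
      push_cast at hc ⊢
      linarith
  · push_neg at hbig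
    refine ⟨univ, univ_nonempty, ?_, ?_⟩
    · have hcard : #(univ : Finset (Stmt6Aux.P n)) = 2 ^ n * 2 ^ n := by
        simp [Finset.card_univ, Fintype.card_finset]
      rw [hcard]
      have h2n : (2:ℕ) ^ n ≤ 2 ^ 15 := Nat.pow_le_pow_right (by norm_num) (by omega)
      have hle : ((2^n*2^n : ℕ):ℝ) ≤ ((2^15*2^15 : ℕ):ℝ) := by
        exact_mod_cast Nat.mul_le_mul h2n h2n
      push_cast at hle ⊢
      norm_num at hle
      linarith
    · intro i j hij
      have h4 := Stmt6Aux.four_mul_card_nonsep_pairs (n := n) hij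
      have htot := card_filter_add_card_filter_not
        (s := (univ : Finset (Stmt6Aux.P n))) (p := fun p => SepPair p i j)
      have huniv : #(univ : Finset (Stmt6Aux.P n)) = 4 ^ n := by
        simp [Finset.card_univ, Fintype.card_finset]
        rw [show (4:ℕ) = 2 * 2 by norm_num, mul_pow]
      have hnat : 2 * 4 ^ n ≤ 3 * #(univ.filter fun p : Stmt6Aux.P n => SepPair p i j) := by
        omega
      rw [huniv]
      have hcast := (Nat.cast_le (α := ℝ)).mpr hnat
      push_cast at hcast ⊢
      linarith
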